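/- arXiv:1405.4729 — 2 statements merged into one kernel-verified Lean document; each statement's English description precedes it below -/
import Mathlib

section
/- Let R be a k-linear category, S a full subcategory, and res: Mod R → Mod S the restriction functor with left adjoint K_L and right adjoint K_R. An R-module M is stable (i.e. Hom(S,M)=0 for all modules S supported away from S) if and only if the adjunction unit M → K_R(res M) is injective. -/
/-!
STATEMENT 0: Let `R` be a `k`-linear category, `S` a full subcategory (given by a fully
faithful embedding `ι : S ⥤ R`), and `res : Mod R → Mod S` the restriction functor with
right adjoint `K_R`.  An `R`-module `M` is stable (i.e. `Hom(N, M) = 0` for every module `N`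
supported away from `S`) if and only if the adjunction unit `M → K_R (res M)` is injective
(a monomorphism).
-/

open CategoryTheory CategoryTheory.Limits Opposite

/-- Modules over a `k`-category `C`: functors `Cᵒᵖ ⥤ CMod k`. -/
abbrev CMod (k : Type) [Field k] (C : Type) [SmallCategory C] : Type 1 :=
  Cᵒᵖ ⥤ ModuleCat k

/-- The restriction functor along a functor `ι : S ⥤ R`. -/
noncomputable def resF (k : Type) [Field k] {S R : Type} [SmallCategory S]
    [SmallCategory R] (ι : S ⥤ R) : CMod k R ⥤ CMod k S :=
  (Functor.whiskeringLeft Sᵒᵖ Rᵒᵖ (ModuleCat k)).obj ι.op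

/-- A module `N` over `R` is supported away from the subcategory `S` if it vanishes on
all objects of `S`. -/
def SupportedAway (k : Type) [Field k] {S R : Type} [SmallCategory S] [SmallCategory R]
    (ι : S ⥤ R) (N : CMod k R) : Prop :=
  ∀ s : S, IsZero (N.obj (op (ι.obj s)))

theorem stable_iff_unit_mono
    (k : Type) [Field k]
    (S R : Type) [SmallCategory S] [SmallCategory R]
    [Preadditive S] [Preadditive R] [CategoryTheory.Linear k S] [CategoryTheory.Linear k R]
    (ι : S ⥤ R) [ι.Full] [ι.Faithful]
    (KR : CMod k S ⥤ CMod k R) (adj : resF k ι ⊣ KR)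
    (M : CMod k R) :
    (∀ N : CMod k R, SupportedAway k ι N → ∀ f : N ⟶ M, f = 0)
      ↔ Mono (adj.unit.app M) := by
  constructor
  · intro H
    set u := adj.unit.app M with hu
    -- the kernel of u is supported away from S
    have hsupp : SupportedAway k ι (kernel u) := by
      intro s
      -- u.app (op (ι.obj s)) is a split mono by the triangle identity
      have htri := adj.left_triangle_components M
      have htri' := congrArg (fun (t : (resF k ι).obj M ⟶ (resF k ι).obj M) =>
        t.app (op s)) htri
      simp only [NatTrans.comp_app, NatTrans.id_app] at htri'
      have hsm : IsSplitMono (u.app (op (ι.obj s))) :=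
        IsSplitMono.mk' ⟨(adj.counit.app ((resF k ι).obj M)).app (op s), htri'⟩
      have hmono : Mono (u.app (op (ι.obj s))) := inferInstance
      -- evaluation preserves kernels
      have e : (kernel u).obj (op (ι.obj s)) ≅ kernel (u.app (op (ι.obj s))) :=
        PreservesKernel.iso ((evaluation Rᵒᵖ (ModuleCat k)).obj (op (ι.obj s))) u
      have hz : IsZero (kernel (u.app (op (ι.obj s)))) :=
        (isZero_zero _).of_iso (kernel.ofMono _)
      exact hz.of_iso e
    have : kernel.ι u = 0 := H _ hsupp _
    exact Preadditive.mono_of_kernel_zero this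
  · intro hmono N hN f
    have hz : IsZero ((resF k ι).obj N) := by
      refine Functor.isZero _ (fun x => ?_)
      exact hN x.unop
    have h1 : (resF k ι).map f = (resF k ι).map (0 : N ⟶ M) := hz.eq_of_src _ _
    have h2 : f ≫ adj.unit.app M = (0 : N ⟶ M) ≫ adj.unit.app M := by
      have n1 := adj.unit.naturality f
      have n2 := adj.unit.naturality (0 : N ⟶ M)
      simp only [Functor.id_map] at n1 n2
      rw [n1, n2]
      simp only [Functor.comp_map, h1]
    exact (cancel_mono (adj.unit.app M)).mp h2
end

section
/- Let R be a k-linear category, S a full subcategory, res: Mod R → Mod S restriction with right adjoint K_R. The adjunction unit M → K_R(res M) is invertible if and only if M is stable and Ext^1(N, M) = 0 for all modules N in the kernel of res. -/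
open CategoryTheory CategoryTheory.Limits Opposite

/-- `M` is stable: no nonzero submodule supported away from `S`; equivalently
`Hom(N, M) = 0` for every module `N` supported away from `S`. -/
def Stable (k : Type) [Field k] {S R : Type} [SmallCategory S] [SmallCategory R]
    (ι : S ⥤ R) (M : CMod k R) : Prop :=
  ∀ N : CMod k R, SupportedAway k ι N → ∀ f : N ⟶ M, f = 0

/-- `M` is costable: no nonzero quotient supported away from `S`; equivalently
`Hom(M, N) = 0` for every module `N` supported away from `S`. -/
def Costable (k : Type) [Field k] {S R : Type} [SmallCategory S] [SmallCategory R]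
    (ι : S ⥤ R) (M : CMod k R) : Prop :=
  ∀ N : CMod k R, SupportedAway k ι N → ∀ f : M ⟶ N, f = 0

/-- `Ext¹(N, M) = 0`, expressed via the splitting of all short exact sequences
`0 → M → E → N → 0` in the abelian category `C`. -/
def Ext1Vanishes {C : Type 1} [Category C] [Abelian C] (N M : C) : Prop :=
  ∀ (Sc : ShortComplex C), Sc.ShortExact → (Sc.X₁ ≅ M) → (Sc.X₃ ≅ N) →
    Nonempty Sc.Splitting

section Aux

variable (k : Type) [Field k] {S R : Type} [SmallCategory S] [SmallCategory R]
  (ι : S ⥤ R)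

/-- The restriction of a supported-away module is a zero object. -/
lemma res_isZero {N : CMod k R} (hN : SupportedAway k ι N) :
    IsZero ((resF k ι).obj N) :=
  Functor.isZero _ (fun o => hN o.unop)

/-- Any map from a supported-away module into an object in the image of `KR` is zero. -/
lemma hom_to_KR_eq_zero {KR : CMod k S ⥤ CMod k R} (adj : resF k ι ⊣ KR)
    {N : CMod k R} (hN : SupportedAway k ι N) (X : CMod k S) (f : N ⟶ KR.obj X) :
    f = 0 := by
  apply (adj.homEquiv N X).symm.injective
  exact (res_isZero k ι hN).eq_of_src _ _

variable [ι.Full] [ι.Faithful]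

/-- The counit of any adjunction `res ⊣ KR` is an isomorphism at every object. -/
lemma counit_app_isIso {KR : CMod k S ⥤ CMod k R} (adj : resF k ι ⊣ KR)
    (X : CMod k S) : IsIso (adj.counit.app X) := by
  have h := Adjunction.rightAdjointUniq_hom_app_counit adj
    (ι.op.ranAdjunction (ModuleCat k)) X
  rw [← h]
  have : IsIso ((ι.op.ranAdjunction (ModuleCat k)).counit.app X) := inferInstance
  exact IsIso.comp_isIso' (Functor.map_isIso _ _) this

/-- The restriction of the unit is an isomorphism. -/
lemma res_unit_isIso {KR : CMod k S ⥤ CMod k R} (adj : resF k ι ⊣ KR)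
    (M : CMod k R) : IsIso ((resF k ι).map (adj.unit.app M)) := by
  have tri := adj.left_triangle_components M
  have h1 : IsIso (adj.counit.app ((resF k ι).obj M)) := counit_app_isIso k ι adj _
  have h2 : IsIso (𝟙 ((resF k ι).obj M)) := inferInstance
  exact IsIso.of_isIso_fac_right tri

lemma unit_app_app_isIso {KR : CMod k S ⥤ CMod k R} (adj : resF k ι ⊣ KR)
    (M : CMod k R) (s : S) : IsIso ((adj.unit.app M).app (op (ι.obj s))) := by
  have := res_unit_isIso k ι adj M
  exact (inferInstance : IsIso (((resF k ι).map (adj.unit.app M)).app (op s)))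

/-- The kernel of the unit is supported away. -/
lemma kernel_unit_supportedAway {KR : CMod k S ⥤ CMod k R} (adj : resF k ι ⊣ KR)
    (M : CMod k R) : SupportedAway k ι (kernel (adj.unit.app M)) := by
  intro s
  set G := (evaluation Rᵒᵖ (ModuleCat k)).obj (op (ι.obj s))
  have : IsIso (G.map (adj.unit.app M)) := unit_app_app_isIso k ι adj M s
  exact IsZero.of_iso (IsZero.of_iso (isZero_zero _) (kernel.ofMono (G.map (adj.unit.app M))))
    (PreservesKernel.iso G (adj.unit.app M))

/-- The cokernel of the unit is supported away. -/
lemma cokernel_unit_supportedAway {KR : CMod k S ⥤ CMod k R} (adj : resF k ι ⊣ KR)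
    (M : CMod k R) : SupportedAway k ι (cokernel (adj.unit.app M)) := by
  intro s
  set G := (evaluation Rᵒᵖ (ModuleCat k)).obj (op (ι.obj s))
  have : IsIso (G.map (adj.unit.app M)) := unit_app_app_isIso k ι adj M s
  exact IsZero.of_iso (IsZero.of_iso (isZero_zero _) (cokernel.ofEpi (G.map (adj.unit.app M))))
    (PreservesCokernel.iso G (adj.unit.app M))

end Aux

/-- the adjunction unit `M ⟶ K_R (res M)` is invertible if and only if `M` is
stable and `Ext¹(N, M) = 0` for every module `N` in the kernel of `res` (i.e. supported
away from `S`). -/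
theorem unit_iso_iff_stable_and_ext_vanishes
    (k : Type) [Field k]
    (S R : Type) [SmallCategory S] [SmallCategory R]
    [Preadditive S] [Preadditive R] [CategoryTheory.Linear k S] [CategoryTheory.Linear k R]
    (ι : S ⥤ R) [ι.Full] [ι.Faithful]
    (KR : CMod k S ⥤ CMod k R) (adj : resF k ι ⊣ KR)
    (M : CMod k R) :
    IsIso (adj.unit.app M)
      ↔ Stable k ι M ∧
        (∀ N : CMod k R, SupportedAway k ι N → Ext1Vanishes N M) := by
  constructor
  · intro hiso
    constructor
    · intro N hN f
      have h : f ≫ adj.unit.app M = 0 := by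
        have := hom_to_KR_eq_zero k ι adj hN ((resF k ι).obj M) (f ≫ adj.unit.app M)
        exact this
      rw [← cancel_mono (adj.unit.app M), h, zero_comp]
    · intro N hN Sc hSc e₁ e₃
      -- X₃ is supported away
      have hX₃ : SupportedAway k ι Sc.X₃ := fun s =>
        IsZero.of_iso (hN s) (((evaluation Rᵒᵖ (ModuleCat k)).obj (op (ι.obj s))).mapIso e₃)
      -- res Sc.f is an isomorphism
      have hptiso : ∀ s : S, IsIso (Sc.f.app (op (ι.obj s))) := by
        intro s
        set G := (evaluation Rᵒᵖ (ModuleCat k)).obj (op (ι.obj s))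
        have hmap : (Sc.map G).ShortExact := hSc.map_of_exact G
        have hg0 : (Sc.map G).g = 0 := (hX₃ s).eq_of_tgt _ _
        have : Mono (Sc.map G).f := hmap.mono_f
        have : Epi (Sc.map G).f := hmap.exact.epi_f hg0
        exact isIso_of_mono_of_epi (Sc.map G).f
      have hres : IsIso ((resF k ι).map Sc.f) := by
        have : ∀ o : Sᵒᵖ, IsIso (((resF k ι).map Sc.f).app o) := fun o => hptiso o.unop
        exact NatIso.isIso_of_isIso_app _
      -- unit at X₁ is iso
      have hu1 : IsIso (adj.unit.app Sc.X₁) := by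
        have hnat : adj.unit.app Sc.X₁ ≫ ((resF k ι) ⋙ KR).map e₁.hom
            = e₁.hom ≫ adj.unit.app M := (adj.unit.naturality e₁.hom).symm
        have : IsIso (adj.unit.app Sc.X₁ ≫ ((resF k ι) ⋙ KR).map e₁.hom) := by
          rw [hnat]; infer_instance
        exact IsIso.of_isIso_comp_right _ (((resF k ι) ⋙ KR).map e₁.hom)
      -- retraction
      refine ⟨ShortComplex.Splitting.ofExactOfRetraction Sc hSc.exact
        (adj.unit.app Sc.X₂ ≫ KR.map (inv ((resF k ι).map Sc.f)) ≫ inv (adj.unit.app Sc.X₁))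
        ?_ hSc.epi_g⟩
      have hnat : Sc.f ≫ adj.unit.app Sc.X₂
          = adj.unit.app Sc.X₁ ≫ KR.map ((resF k ι).map Sc.f) :=
        (adj.unit.naturality Sc.f)
      rw [← Category.assoc, ← Category.assoc, hnat]
      simp only [Category.assoc, ← Functor.map_comp, IsIso.hom_inv_id]
      rw [CategoryTheory.Functor.map_id]
      simp
  · rintro ⟨hstab, hext⟩
    set η := adj.unit.app M with hη
    -- kernel is zero
    have hk := kernel_unit_supportedAway k ι adj M
    have hι0 : kernel.ι η = 0 := hstab _ hk _
    have hmono : Mono η := Preadditive.mono_of_kernel_zero hι0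
    -- short exact sequence 0 → M → KR(res M) → coker → 0
    set Sc0 := ShortComplex.mk η (cokernel.π η) (cokernel.condition η) with hSc0def
    have hSc0 : Sc0.ShortExact :=
      { exact := ShortComplex.exact_of_g_is_cokernel _ (cokernelIsCokernel η)
        mono_f := hmono
        epi_g := by dsimp [Sc0]; infer_instance }
    obtain ⟨sp⟩ := hext (cokernel η) (cokernel_unit_supportedAway k ι adj M) Sc0 hSc0
      (Iso.refl _) (Iso.refl _)
    have hfr : η ≫ sp.r = 𝟙 M := sp.f_r
    -- show r ≫ η = 𝟙
    have hηt : η ≫ (𝟙 ((resF k ι ⋙ KR).obj M) - sp.r ≫ η) = 0 := by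
      simp only [Preadditive.comp_sub, Category.comp_id]
      rw [← Category.assoc, hfr]
      simp
    have hu : cokernel.π η ≫ cokernel.desc η _ hηt
        = 𝟙 ((resF k ι ⋙ KR).obj M) - sp.r ≫ η := cokernel.π_desc _ _ _
    have hu0 : cokernel.desc η _ hηt = 0 :=
      hom_to_KR_eq_zero k ι adj (cokernel_unit_supportedAway k ι adj M) _ _
    rw [hu0, comp_zero] at hu
    have hrf : sp.r ≫ η = 𝟙 _ := by
      have := hu.symm
      rwa [sub_eq_zero, eq_comm] at this
    exact ⟨sp.r, hfr, hrf⟩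
end
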